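/- For every odd d there exists a univariate polynomial f of degree d on [-1,1] such that ‖f‖_{[-1,1],∞} ≥ (d²/8) ‖f‖_{[-1,1],1}. Consequently, for every n, the product polynomial f_n(x₁,…,x_n) = ∏ᵢ f(xᵢ) of individual degree d satisfies ‖f_n‖_{[-1,1]ⁿ,∞} ≥ (d²/8)ⁿ ‖f_n‖_{[-1,1]ⁿ,1}. -/

import Mathlib

open Set MeasureTheory Polynomial

namespace Stmt3Aux

noncomputable def u (n : ℕ) : ℝ[X] := (X ^ 2 - 1) ^ n
noncomputable def R (n : ℕ) : ℝ[X] := derivative^[n] (u n)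
noncomputable def q (n : ℕ) : ℝ[X] := derivative (R n)

lemma u_struct (n : ℕ) : ∀ j, j ≤ n → ∃ g : ℝ[X],
    derivative^[j] (u n) = (X ^ 2 - 1) ^ (n - j) * g ∧
    g.eval 1 = 2 ^ j * (n.descFactorial j) := by
  intro j
  induction j with
  | zero => exact fun _ => ⟨1, by simp [u], by simp⟩
  | succ j ih =>
    intro hj
    obtain ⟨g, hg, hg1⟩ := ih (by omega)
    refine ⟨C ((n - j : ℕ) : ℝ) * (2 * X) * g + (X ^ 2 - 1) * derivative g, ?_, ?_⟩
    · rw [Function.iterate_succ_apply', hg]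
      have hnj : n - j = (n - (j + 1)) + 1 := by omega
      rw [hnj, derivative_mul, derivative_pow]
      have : ((n - (j+1) + 1 : ℕ) : ℝ) = ((n - j : ℕ) : ℝ) := by rw [← hnj]
      simp only [Nat.add_sub_cancel, this, derivative_sub, derivative_one, derivative_X_pow,
        map_natCast, map_ofNat]
      push_cast
      ring
    · have : (n.descFactorial (j + 1) : ℝ) = ((n - j : ℕ) : ℝ) * n.descFactorial j := by
        rw [Nat.descFactorial_succ]; push_cast; ring
      simp [hg1, this]
      ring

lemma iter_deriv_X_mul (w : ℝ[X]) : ∀ k, derivative^[k + 1] (X * w) =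
    X * derivative^[k + 1] w + C ((k + 1 : ℕ) : ℝ) * derivative^[k] w := by
  intro k
  induction k with
  | zero => simp [derivative_mul]; ring
  | succ k ih =>
    rw [Function.iterate_succ_apply' _ (k+1), ih]
    rw [Function.iterate_succ_apply' _ (k+1) w, Function.iterate_succ_apply' _ k w]
    simp only [derivative_add, derivative_mul, derivative_X, derivative_C, map_natCast, map_ofNat, derivative_natCast, derivative_ofNat, derivative_one]
    push_cast
    ring

lemma iter_deriv_sq_mul (w : ℝ[X]) : ∀ k, derivative^[k + 2] ((X ^ 2 - 1) * w) =
    (X ^ 2 - 1) * derivative^[k + 2] w + C ((2 * (k + 2) : ℕ) : ℝ) * X * derivative^[k + 1] w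
      + C (((k + 2) * (k + 1) : ℕ) : ℝ) * derivative^[k] w := by
  intro k
  induction k with
  | zero =>
    show derivative (derivative ((X ^ 2 - 1) * w)) = _
    simp only [derivative_mul, derivative_sub, derivative_one, derivative_X_pow, derivative_add,
      derivative_X, map_natCast, map_ofNat, sub_zero, derivative_zero, zero_mul, mul_one, derivative_natCast, derivative_ofNat,
      Function.iterate_succ_apply', Function.iterate_zero_apply, Function.iterate_one]
    push_cast
    ring
  | succ k ih =>
    rw [Function.iterate_succ_apply' _ (k+2), ih]
    rw [Function.iterate_succ_apply' _ (k+2) w, Function.iterate_succ_apply' _ (k+1) w,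
      Function.iterate_succ_apply' _ k w]
    simp only [derivative_add, derivative_mul, derivative_sub, derivative_one, derivative_X_pow,
      derivative_C, derivative_X, map_natCast, map_ofNat, derivative_natCast, sub_zero, zero_mul,
      mul_one]
    push_cast
    ring

lemma base_ode (n : ℕ) (hn : 1 ≤ n) :
    (X ^ 2 - 1) * derivative (u n) = C ((2 * n : ℕ) : ℝ) * (X * u n) := by
  obtain ⟨m, rfl⟩ : ∃ m, n = m + 1 := ⟨n - 1, by omega⟩
  simp only [u, derivative_pow, Nat.add_sub_cancel, derivative_sub, derivative_one,
    derivative_X_pow, map_natCast, map_ofNat, sub_zero, derivative_X]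
  push_cast
  ring

lemma legendre_ode (n : ℕ) (hn : 1 ≤ n) :
    (X ^ 2 - 1) * derivative (q n) + 2 * X * q n = C ((n * (n + 1) : ℕ) : ℝ) * R n := by
  obtain ⟨m, rfl⟩ : ∃ m, n = m + 1 := ⟨n - 1, by omega⟩
  have key := congrArg (fun p => derivative^[m + 2] p) (base_ode (m + 1) (by omega))
  rw [iter_deriv_sq_mul (derivative (u (m+1))) m] at key
  have hc : ∀ j, derivative^[j] (derivative (u (m+1))) = derivative^[j + 1] (u (m+1)) := by
    intro j; rw [Function.iterate_succ_apply]
  rw [hc (m+2), hc (m+1), hc m] at key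
  have h2 : derivative^[m + 2] (C ((2 * (m+1) : ℕ) : ℝ) * (X * u (m+1)))
      = C ((2 * (m+1) : ℕ) : ℝ) * (X * derivative^[m + 2] (u (m+1))
        + C ((m + 2 : ℕ) : ℝ) * derivative^[m + 1] (u (m+1))) := by
    rw [show derivative^[m + 2] (C ((2 * (m+1) : ℕ) : ℝ) * (X * u (m+1)))
        = C ((2 * (m+1) : ℕ) : ℝ) * derivative^[m + 2] (X * u (m+1)) by
      induction' (m + 2) with k ihk
      · simp
      · rw [Function.iterate_succ_apply', Function.iterate_succ_apply', ihk, derivative_mul,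
          derivative_C, zero_mul, zero_add]]
    rw [show m + 2 = (m + 1) + 1 from rfl, iter_deriv_X_mul (u (m+1)) (m+1)]
  rw [h2] at key
  have hR : derivative^[m + 1 + 1] (u (m + 1)) = derivative (R (m+1)) := by
    rw [Function.iterate_succ_apply']; rfl
  have hR2 : derivative^[m + 1 + 2] (u (m + 1)) = derivative (derivative (R (m+1))) := by
    rw [show m + 1 + 2 = (m + 1 + 1) + 1 from rfl, Function.iterate_succ_apply', hR]
  rw [show m + 2 + 1 = m + 1 + 2 from rfl, show m + 2 = m + 1 + 1 from rfl] at key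
  rw [hR, hR2] at key
  show (X ^ 2 - 1) * derivative (derivative (R (m+1))) + 2 * X * derivative (R (m+1)) = _
  have : R (m + 1) = derivative^[m + 1] (u (m + 1)) := rfl
  rw [← this] at key
  simp only [map_natCast, map_ofNat] at key ⊢
  push_cast at key ⊢
  linear_combination key

lemma eval_ode (n : ℕ) (hn : 1 ≤ n) :
    (q n).eval 1 = (n * (n + 1) : ℝ) / 2 * (R n).eval 1 := by
  have := congrArg (fun p => Polynomial.eval (1:ℝ) p) (legendre_ode n hn)
  simp only [eval_add, eval_mul, eval_sub, eval_pow, eval_X, eval_one, eval_C, eval_ofNat,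
    eval_natCast] at this
  push_cast at this
  nlinarith [this]

lemma R_eval_one (n : ℕ) : (R n).eval 1 = 2 ^ n * (n.factorial : ℝ) := by
  obtain ⟨g, hg, hg1⟩ := u_struct n n le_rfl
  have : R n = g := by rw [R, hg]; simp
  rw [this, hg1, Nat.descFactorial_self]

lemma u_monic (n : ℕ) : ((X ^ 2 - 1 : ℝ[X]) ^ n).Monic := by
  have h := (monic_X_pow_sub_C (1:ℝ) (two_ne_zero)).pow (n := n)
  simpa using h

lemma base_natDegree : (X ^ 2 - 1 : ℝ[X]).natDegree = 2 := by
  have : (X ^ 2 - 1 : ℝ[X]) = X ^ 2 - C 1 := by simp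
  rw [this, natDegree_X_pow_sub_C]

lemma u_natDegree (n : ℕ) : (u n).natDegree = 2 * n := by
  rw [u, natDegree_pow, base_natDegree]; ring

lemma q_coeff (n : ℕ) (hn : 1 ≤ n) : (q n).coeff (n - 1) ≠ 0 := by
  have hq : q n = derivative^[n + 1] (u n) :=
    (Function.iterate_succ_apply' derivative n (u n)).symm
  rw [hq, coeff_iterate_derivative]
  have hnn : n - 1 + (n + 1) = 2 * n := by omega
  rw [hnn]
  have : (u n).coeff (2 * n) = 1 := by
    have := (u_monic n).coeff_natDegree
    rwa [show ((X ^ 2 - 1 : ℝ[X]) ^ n).natDegree = 2 * n from u_natDegree n] at this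
  rw [this]
  simp only [nsmul_eq_mul, mul_one, ne_eq, Nat.cast_eq_zero,
    Nat.descFactorial_eq_zero_iff_lt]
  omega

lemma q_natDegree (n : ℕ) (hn : 1 ≤ n) : (q n).natDegree = n - 1 := by
  have hq : q n = derivative^[n + 1] (u n) :=
    (Function.iterate_succ_apply' derivative n (u n)).symm
  have hle : (q n).natDegree ≤ n - 1 := by
    have := natDegree_iterate_derivative (u n) (n + 1)
    rw [u_natDegree n] at this
    rw [hq]; omega
  have hge := le_natDegree_of_ne_zero (q_coeff n hn)
  omega

lemma q_ne_zero (n : ℕ) (hn : 1 ≤ n) : q n ≠ 0 := fun h => q_coeff n hn (by simp [h])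

lemma poly_intervalIntegrable (p : ℝ[X]) (a b : ℝ) :
    IntervalIntegrable (fun x => p.eval x) volume a b :=
  p.continuous.intervalIntegrable a b

lemma integral_eval_derivative (p : ℝ[X]) (a b : ℝ) :
    ∫ x in a..b, (derivative p).eval x = p.eval b - p.eval a := by
  apply intervalIntegral.integral_deriv_eq_sub' (fun x => p.eval x)
  · funext x; exact Polynomial.deriv (p := p)
  · exact fun x _ => p.differentiable.differentiableAt
  · exact (derivative p).continuous.continuousOn

lemma boundary_eval (n : ℕ) (k : ℕ) (hk : k < n) (x : ℝ) (hx : x ^ 2 - 1 = 0) :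
    (derivative^[k] (u n)).eval x = 0 := by
  obtain ⟨g, hg, -⟩ := u_struct n k (by omega)
  rw [hg]
  have hnk : n - k = (n - k - 1) + 1 := by omega
  rw [hnk, pow_succ]
  simp only [eval_mul, eval_sub, eval_pow, eval_one, eval_X, hx]
  ring

lemma orth (n : ℕ) : ∀ k, k ≤ n → ∀ g : ℝ[X], g.natDegree < k →
    ∫ x in (-1:ℝ)..1, (derivative^[k] (u n) * g).eval x = 0 := by
  intro k
  induction k with
  | zero => exact fun _ g hg => absurd hg (Nat.not_lt_zero _)
  | succ k ih =>
    intro hk g hg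
    have key : derivative^[k+1] (u n) * g
        = derivative (derivative^[k] (u n) * g) - derivative^[k] (u n) * derivative g := by
      rw [Function.iterate_succ_apply', derivative_mul]; ring
    rw [key]
    have hb : ∀ y : ℝ, y ^ 2 - 1 = 0 →
        (derivative^[k] (u n) * g).eval y = 0 := by
      intro y hy
      rw [eval_mul, boundary_eval n k (by omega) y hy, zero_mul]
    have h1 : ∫ x in (-1:ℝ)..1, (derivative (derivative^[k] (u n) * g)).eval x = 0 := by
      rw [integral_eval_derivative, hb 1 (by norm_num), hb (-1) (by norm_num), sub_zero]
    have h2 : ∫ x in (-1:ℝ)..1, (derivative^[k] (u n) * derivative g).eval x = 0 := by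
      rcases eq_or_ne g.natDegree 0 with h0 | h0
      · rw [derivative_of_natDegree_zero h0]; simp
      · exact ih (by omega) _ (lt_of_lt_of_le (natDegree_derivative_lt h0) (by omega))
    simp only [eval_sub]
    rw [intervalIntegral.integral_sub (poly_intervalIntegrable _ _ _)
      (poly_intervalIntegrable _ _ _), h1, h2, sub_zero]

lemma main_integral (n : ℕ) (hn : 1 ≤ n) :
    ∫ x in (-1:ℝ)..1, ((X + 1) * q n ^ 2).eval x
      = 2 * (q n).eval 1 * (R n).eval 1 := by
  set F : ℝ[X] := (X + 1) * q n * R n with hF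
  set g : ℝ[X] := derivative ((X + 1) * q n) with hgdef
  have key : (X + 1) * q n ^ 2 = derivative F - R n * g := by
    simp only [hF, hgdef, derivative_mul, derivative_add, derivative_X, derivative_one]
    have : derivative (R n) = q n := rfl
    rw [this]; ring
  have hgdeg : g.natDegree < n := by
    have hmul : ((X + 1) * q n).natDegree = n := by
      rw [natDegree_mul (by exact X_add_C_ne_zero (1:ℝ)) (q_ne_zero n hn)]
      have : (X + 1 : ℝ[X]).natDegree = 1 := by
        have := natDegree_X_add_C (1:ℝ); simpa using this
      rw [this, q_natDegree n hn]; omega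
    have h2 := natDegree_derivative_lt (p := (X + 1) * q n) (by omega)
    rw [← hgdef] at h2
    omega
  have horth : ∫ x in (-1:ℝ)..1, (R n * g).eval x = 0 := orth n n le_rfl g hgdeg
  rw [key]
  simp only [eval_sub]
  rw [intervalIntegral.integral_sub (poly_intervalIntegrable _ _ _)
    (poly_intervalIntegrable _ _ _), horth, sub_zero, integral_eval_derivative]
  simp only [hF, eval_mul, eval_add, eval_X, eval_one]
  norm_num

end Stmt3Aux

open Set MeasureTheory

open Stmt3Aux

theorem stmt3 (d : ℕ) (hd : Odd d) :
    ∃ f : Polynomial ℝ, f.natDegree = d ∧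
      sSup ((fun x => |f.eval x|) '' Icc (-1 : ℝ) 1) ≥
        ((d : ℝ) ^ 2 / 8) * ∫ x in Icc (-1 : ℝ) 1, |f.eval x| ∧
      ∀ n : ℕ,
        sSup ((fun x : Fin n → ℝ => |∏ i, f.eval (x i)|) ''
            Set.pi Set.univ (fun _ : Fin n => Icc (-1 : ℝ) 1)) ≥
          ((d : ℝ) ^ 2 / 8) ^ n *
            ∫ x in Set.pi Set.univ (fun _ : Fin n => Icc (-1 : ℝ) 1),
              |∏ i, f.eval (x i)| := by
  obtain ⟨m, rfl⟩ := hd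
  set n : ℕ := m + 1 with hn
  have hn1 : 1 ≤ n := by omega
  set f : ℝ[X] := (X + 1) * q n ^ 2 with hf
  set q1 : ℝ := (q n).eval 1 with hq1def
  set r : ℝ := (R n).eval 1 with hrdef
  have hrpos : 0 < r := by rw [hrdef, R_eval_one]; positivity
  have hq1 : q1 = ((n : ℝ) * ((n : ℝ) + 1)) / 2 * r := by
    rw [hq1def, eval_ode n hn1]
  have hnpos : (0:ℝ) < (n:ℝ) := Nat.cast_pos.mpr (by omega)
  have hq1pos : 0 < q1 := by
    rw [hq1]
    exact mul_pos (by nlinarith) hrpos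
  -- integral value
  have hIval : ∫ x in Icc (-1:ℝ) 1, |f.eval x| = 2 * q1 * r := by
    have h1 : Set.EqOn (fun x => |f.eval x|) (fun x => f.eval x) (Icc (-1:ℝ) 1) := by
      intro x hx
      have hx1 : (-1:ℝ) ≤ x := hx.1
      simp only
      apply abs_of_nonneg
      rw [hf]
      simp only [eval_mul, eval_add, eval_X, eval_one, eval_pow]
      have h2 : (0:ℝ) ≤ x + 1 := by linarith
      positivity
    rw [setIntegral_congr_fun measurableSet_Icc h1, integral_Icc_eq_integral_Ioc,
      ← intervalIntegral.integral_of_le (by norm_num : (-1:ℝ) ≤ 1)]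
    exact main_integral n hn1
  have hfe1 : f.eval 1 = 2 * q1 ^ 2 := by
    rw [hf]; simp only [eval_mul, eval_add, eval_X, eval_one, eval_pow, ← hq1def]; ring
  -- core inequality
  have hd2 : ((2 * m + 1 : ℕ) : ℝ) = 2 * (n : ℝ) - 1 := by rw [hn]; push_cast; ring
  have hnr : (1:ℝ) ≤ (n:ℝ) := by exact_mod_cast hn1
  have core : ((2 * m + 1 : ℕ) : ℝ) ^ 2 / 8 * (2 * q1 * r) ≤ 2 * q1 ^ 2 := by
    rw [hd2, hq1]
    have h8 : (2 * (n:ℝ) - 1) ^ 2 ≤ 4 * (n:ℝ) * ((n:ℝ) + 1) := by nlinarith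
    nlinarith [mul_pos hrpos hrpos, sq_nonneg r,
      mul_le_mul_of_nonneg_right h8 (mul_pos hrpos hrpos).le,
      mul_pos (mul_pos (by linarith : (0:ℝ) < (n:ℝ)) (by linarith : (0:ℝ) < (n:ℝ) + 1))
        (mul_pos hrpos hrpos)]
  refine ⟨f, ?_, ?_, ?_⟩
  · -- degree
    rw [hf, natDegree_mul (by simpa using X_add_C_ne_zero (1:ℝ))
        (pow_ne_zero 2 (q_ne_zero n hn1)), natDegree_pow, q_natDegree n hn1]
    have : (X + 1 : ℝ[X]).natDegree = 1 := by simpa using natDegree_X_add_C (1:ℝ)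
    rw [this]; omega
  · -- univariate
    have hBdd : BddAbove ((fun x => |f.eval x|) '' Icc (-1:ℝ) 1) :=
      (isCompact_Icc.image f.continuous.abs).bddAbove
    have hmem : |f.eval 1| ∈ (fun x => |f.eval x|) '' Icc (-1:ℝ) 1 :=
      ⟨1, by constructor <;> norm_num, rfl⟩
    have hsup := le_csSup hBdd hmem
    rw [hIval]
    refine le_trans ?_ hsup
    rw [hfe1, abs_of_nonneg (by positivity : (0:ℝ) ≤ 2 * q1 ^ 2)]
    exact core
  · -- multivariate
    intro N
    set S : Set (Fin N → ℝ) := Set.pi Set.univ (fun _ => Icc (-1:ℝ) 1) with hS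
    have hcont : Continuous (fun x : Fin N → ℝ => |∏ i, f.eval (x i)|) :=
      (continuous_finset_prod Finset.univ
        (fun i _ => f.continuous.comp (continuous_apply i))).abs
    have hBdd : BddAbove ((fun x : Fin N → ℝ => |∏ i, f.eval (x i)|) '' S) :=
      ((isCompact_univ_pi (fun _ => isCompact_Icc)).image hcont).bddAbove
    have hmemS : (fun _ => (1:ℝ)) ∈ S := by
      rw [hS, Set.mem_univ_pi]; intro i; constructor <;> norm_num
    have hval : (fun x : Fin N → ℝ => |∏ i, f.eval (x i)|) (fun _ => (1:ℝ))
        = (2 * q1 ^ 2) ^ N := by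
      simp only [Finset.prod_const, Finset.card_univ, Fintype.card_fin]
      rw [abs_pow, hfe1, abs_of_nonneg (by positivity : (0:ℝ) ≤ 2 * q1 ^ 2)]
    have hsup := le_csSup hBdd ⟨(fun _ => (1:ℝ)), hmemS, hval⟩
    -- integral over the cube
    have hmeas : MeasurableSet S := MeasurableSet.univ_pi (fun _ => measurableSet_Icc)
    set G : ℝ → ℝ := Set.indicator (Icc (-1:ℝ) 1) (fun t => |f.eval t|) with hG
    have key : ∀ x : Fin N → ℝ,
        S.indicator (fun x : Fin N → ℝ => |∏ i, f.eval (x i)|) x = ∏ i, G (x i) := by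
      intro x
      by_cases hx : x ∈ S
      · rw [Set.indicator_of_mem hx, Finset.abs_prod]
        refine Finset.prod_congr rfl fun i _ => ?_
        rw [hG, Set.indicator_of_mem (hx i trivial)]
      · rw [Set.indicator_of_notMem hx]
        rw [hS, Set.mem_univ_pi, not_forall] at hx
        obtain ⟨i, hi⟩ := hx
        exact (Finset.prod_eq_zero (Finset.mem_univ i)
          (by rw [hG, Set.indicator_of_notMem hi])).symm
    have hInt : ∫ x in S, |∏ i, f.eval (x i)| = (2 * q1 * r) ^ N := by
      rw [← integral_indicator hmeas]
      calc ∫ x : Fin N → ℝ, S.indicator (fun x : Fin N → ℝ => |∏ i, f.eval (x i)|) x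
          = ∫ x : Fin N → ℝ, ∏ i, G (x i) := by simp_rw [key]
        _ = (∫ t : ℝ, G t) ^ N := by
            rw [volume_pi, MeasureTheory.integral_fintype_prod_eq_pow (ι := Fin N) G, Fintype.card_fin]
        _ = (2 * q1 * r) ^ N := by
            rw [hG, integral_indicator measurableSet_Icc, hIval]
    rw [hInt]
    refine le_trans ?_ hsup
    rw [← mul_pow]
    exact pow_le_pow_left₀ (by positivity) core N
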